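/- Let M be a monoid and A ⊆ M, and define for each a ∈ M the 'row' function r_a : M → Prop by r_a(c) = (a·c ∈ A). Then A is recognizable if and only if the set {r_a : a ∈ M} of row functions is finite. -/

import Mathlib

structure RecogWitness (M : Type*) [Monoid M] (A : Set M) where
  F : Type
  [instMonoid : Monoid F]
  [instFinite : Finite F]
  α : M →* F
  fibres : A = ⇑α ⁻¹' (⇑α '' A)

/-- `A` is recognizable: a union of fibres of a monoid hom into a finite monoid. -/
def Recognizable {M : Type*} [Monoid M] (A : Set M) : Prop :=
  Nonempty (RecogWitness M A)

theorem recognizable_iff_finitely_many_rows {M : Type*} [Monoid M] (A : Set M) :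
    Recognizable A ↔ (Set.range fun a : M => fun c : M => a * c ∈ A).Finite := by
  classical
  set r : M → (M → Prop) := fun a c => a * c ∈ A with hr
  constructor
  · rintro ⟨⟨F, α, hA⟩⟩
    have memA : ∀ x : M, (x ∈ A) = (α x ∈ ⇑α '' A) := by
      intro x
      conv_lhs => rw [hA]
      rfl
    have row_eq : ∀ a b : M, α a = α b → r a = r b := by
      intro a b h
      funext c
      show (a * c ∈ A) = (b * c ∈ A)
      rw [memA (a * c), memA (b * c), map_mul, map_mul, h]
    have hsub : Set.range r ⊆
        (fun f : F => if h : ∃ a, α a = f then r h.choose else r 1) '' Set.univ := by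
      rintro _ ⟨a, rfl⟩
      refine ⟨α a, Set.mem_univ _, ?_⟩
      show (if h : ∃ x, α x = α a then r h.choose else r 1) = r a
      rw [dif_pos (⟨a, rfl⟩ : ∃ x, α x = α a)]
      exact row_eq _ _ (⟨a, rfl⟩ : ∃ x, α x = α a).choose_spec
    exact (Set.finite_univ.image _).subset hsub
  · intro hfin
    haveI : Finite (Set.range r) := hfin
    obtain ⟨n, ⟨e⟩⟩ := Finite.exists_equiv_fin (Set.range r)
    have key : ∀ a b : M, r a = r b → ∀ x : M, r (a * x) = r (b * x) := by
      intro a b h x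
      funext c
      have := congrFun h (x * c)
      simpa [r, mul_assoc] using this
    set pick : Set.range r → M := fun f => f.2.choose with hpick
    have pick_spec : ∀ f : Set.range r, r (pick f) = f.1 := fun f => f.2.choose_spec
    set step : M → Set.range r → Set.range r :=
      fun m f => ⟨r (pick f * m), ⟨_, rfl⟩⟩ with hstep
    have step_row : ∀ (m a : M) (h : r a ∈ Set.range r),
        step m ⟨r a, h⟩ = ⟨r (a * m), ⟨_, rfl⟩⟩ := by
      intro m a h
      apply Subtype.ext
      exact key _ _ (pick_spec ⟨r a, h⟩) m
    have step_comp : ∀ (m m' : M) (f : Set.range r),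
        step (m * m') f = step m' (step m f) := by
      intro m m' f
      apply Subtype.ext
      show r (pick f * (m * m')) = r (pick (step m f) * m')
      have h1 : r (pick (step m f)) = r (pick f * m) := pick_spec (step m f)
      rw [← mul_assoc]
      exact (key _ _ h1 m').symm
    haveI : Finite (Function.End (Fin n)) := inferInstanceAs (Finite (Fin n → Fin n))
    haveI : Finite (Function.End (Fin n))ᵐᵒᵖ :=
      Finite.of_equiv (Function.End (Fin n)) MulOpposite.opEquiv
    let α : M →* (Function.End (Fin n))ᵐᵒᵖ :=
      { toFun := fun m => MulOpposite.op (fun i => e (step m (e.symm i)))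
        map_one' := by
          show MulOpposite.op (fun i => e (step 1 (e.symm i))) = MulOpposite.op (1 : Function.End (Fin n))
          congr 1
          funext i
          show e (step 1 (e.symm i)) = i
          have : step 1 (e.symm i) = e.symm i := by
            apply Subtype.ext
            show r (pick (e.symm i) * 1) = (e.symm i).1
            rw [mul_one]; exact pick_spec _
          rw [this, e.apply_symm_apply]
        map_mul' := by
          intro m m'
          show MulOpposite.op (α := Function.End (Fin n)) (fun i => e (step (m * m') (e.symm i)))
            = MulOpposite.op (α := Function.End (Fin n)) (fun i => e (step m (e.symm i)))
              * MulOpposite.op (α := Function.End (Fin n)) (fun i => e (step m' (e.symm i)))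
          apply MulOpposite.unop_injective
          refine funext fun i => ?_
          show e (step (m * m') (e.symm i))
            = e (step m' (e.symm (e (step m (e.symm i)))))
          rw [e.symm_apply_apply, step_comp] }
    refine ⟨⟨(Function.End (Fin n))ᵐᵒᵖ, α, ?_⟩⟩
    ext x
    constructor
    · exact fun hx => Set.mem_image_of_mem _ hx
    · rintro ⟨a, ha, hax⟩
      have h1 : (fun i => e (step a (e.symm i))) = (fun i => e (step x (e.symm i))) :=
        congrArg MulOpposite.unop hax
      have h2 := congrFun h1 (e ⟨r 1, ⟨1, rfl⟩⟩)
      simp only [e.symm_apply_apply] at h2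
      have h3 : step a ⟨r 1, ⟨1, rfl⟩⟩ = step x ⟨r 1, ⟨1, rfl⟩⟩ := e.injective h2
      rw [step_row a 1 ⟨1, rfl⟩, step_row x 1 ⟨1, rfl⟩] at h3
      have h4 : r (1 * a) = r (1 * x) := congrArg Subtype.val h3
      rw [one_mul, one_mul] at h4
      have h5 : (a * 1 ∈ A) = (x * 1 ∈ A) := congrFun h4 1
      have hx1 : x * 1 ∈ A := by
        rw [← h5, mul_one]; exact ha
      simpa using hx1
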